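/- Let N ≥ 1 be an integer and let χ : ℝ → [0,1] be a twice continuously differentiable function with χ(θ) = 1 for θ ≤ π and χ(θ) = 0 for θ ≥ 2π. Then there exists a constant C₂ ≥ 1, depending only on N and on upper bounds for |χ′| and |χ″|, with the following property. For any positive real numbers y₁, …, y_N, define G on {(s,θ) ∈ ℝ² : θ > 0, and e^{s+Iθ} ≠ I·y_j for every j with 0 < θ < π} by G(s,θ) = C₂·e^{−2s} + χ(θ)·Σ_{j=1}^N |e^{s+Iθ} − I·y_j|^{−2}, and define δ(s,θ) = min(e^s, min_j |e^{s+Iθ} − I·y_j|) when 0 < θ < π and δ(s,θ) = e^s when θ ≥ π. Then at every point of its domain, ∂²G/∂s² + ∂²G/∂θ² ≥ 4·e^{2s}/δ(s,θ)⁴. -/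

import Mathlib

noncomputable section

open Complex

/-- The barrier `G(s,θ) = C₂·e^{−2s} + χ(θ)·Σⱼ |e^{s+Iθ} − I·yⱼ|⁻²` written in the
logarithmic coordinates `z = e^{s+Iθ}` on the universal cover of `ℂ ∖ {0}`. -/
def barrierG (N : ℕ) (C₂ : ℝ) (χ : ℝ → ℝ) (y : Fin N → ℝ) (s θ : ℝ) : ℝ :=
  C₂ * Real.exp (-2 * s) +
    χ θ * ∑ j, ((‖Complex.exp ((s : ℂ) + Complex.I * (θ : ℂ)) -
      Complex.I * (y j : ℂ)‖) ^ 2)⁻¹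

/-- The distance function `δ`. -/
def deltaFn (N : ℕ) (y : Fin N → ℝ) (s θ : ℝ) : ℝ :=
  if θ < Real.pi then
    min (Real.exp s)
      (⨅ j, ‖Complex.exp ((s : ℂ) + Complex.I * (θ : ℂ)) -
        Complex.I * (y j : ℂ)‖)
  else Real.exp s

def aa (y s θ : ℝ) : ℝ := Real.exp s ^ 2 - 2*y*Real.exp s*Real.sin θ + y^2

lemma abs_sq_eq (y s θ : ℝ) :
    (‖Complex.exp ((s : ℂ) + Complex.I * (θ : ℂ)) - Complex.I * (y : ℂ)‖)^2
      = aa y s θ := by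
  rw [Complex.sq_norm, Complex.normSq_apply]
  have h1 : ((s : ℂ) + Complex.I * (θ : ℂ)).re = s := by simp
  have h2 : ((s : ℂ) + Complex.I * (θ : ℂ)).im = θ := by simp
  simp [Complex.sub_re, Complex.sub_im, Complex.exp_re, Complex.exp_im, h1, h2, aa]
  nlinarith [Real.sin_sq_add_cos_sq θ]

lemma hasDerivAt_aa_s (y s θ : ℝ) :
    HasDerivAt (fun s' => aa y s' θ) (2*Real.exp s^2 - 2*y*Real.exp s*Real.sin θ) s := by
  unfold aa
  have h1 : HasDerivAt (fun s' => Real.exp s' ^ 2) (2*Real.exp s^2) s := by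
    have := ((Real.hasDerivAt_exp s).pow 2)
    exact this.congr_deriv (by ring)
  have h2 : HasDerivAt (fun s' => 2*y*Real.exp s'*Real.sin θ) (2*y*Real.exp s*Real.sin θ) s := by
    have := ((Real.hasDerivAt_exp s).const_mul (2*y)).mul_const (Real.sin θ)
    convert this using 2 <;> ring
  exact (h1.sub h2).add_const _

lemma hasDerivAt_aa_th (y s θ : ℝ) :
    HasDerivAt (fun θ' => aa y s θ') (-(2*y*Real.exp s*Real.cos θ)) θ := by
  unfold aa
  have h2 : HasDerivAt (fun θ' => 2*y*Real.exp s*Real.sin θ') (2*y*Real.exp s*Real.cos θ) θ := by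
    have := (Real.hasDerivAt_sin θ).const_mul (2*y*Real.exp s)
    convert this using 2 <;> ring
  have := (hasDerivAt_const θ (Real.exp s ^2)).sub h2
  exact (this.add_const (y^2)).congr_deriv (by ring)

/-- first s-derivative of (aa)⁻¹ -/
def gs (y s θ : ℝ) : ℝ := -(2*Real.exp s^2 - 2*y*Real.exp s*Real.sin θ)/(aa y s θ)^2
/-- first θ-derivative of (aa)⁻¹ -/
def gtf (y s θ : ℝ) : ℝ := (2*y*Real.exp s*Real.cos θ)/(aa y s θ)^2

lemma hasDerivAt_inv_aa_s (y s θ : ℝ) (h : aa y s θ ≠ 0) :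
    HasDerivAt (fun s' => (aa y s' θ)⁻¹) (gs y s θ) s := by
  have := (hasDerivAt_aa_s y s θ).inv h
  exact this

lemma hasDerivAt_inv_aa_th (y s θ : ℝ) (h : aa y s θ ≠ 0) :
    HasDerivAt (fun θ' => (aa y s θ')⁻¹) (gtf y s θ) θ := by
  have := (hasDerivAt_aa_th y s θ).inv h
  exact this.congr_deriv (by simp only [gtf]; ring)

lemma hasDerivAt_gs (y s θ : ℝ) (h : aa y s θ ≠ 0) :
    HasDerivAt (fun s' => gs y s' θ)
      (-(4*Real.exp s^2 - 2*y*Real.exp s*Real.sin θ)/(aa y s θ)^2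
        + 2*(2*Real.exp s^2 - 2*y*Real.exp s*Real.sin θ)^2/(aa y s θ)^3) s := by
  have hnum : HasDerivAt (fun s' => -(2*Real.exp s'^2 - 2*y*Real.exp s'*Real.sin θ))
      (-(4*Real.exp s^2 - 2*y*Real.exp s*Real.sin θ)) s := by
    have h1 : HasDerivAt (fun s' => Real.exp s' ^ 2) (2*Real.exp s^2) s := by
      have := ((Real.hasDerivAt_exp s).pow 2); exact this.congr_deriv (by ring)
    have h2 : HasDerivAt (fun s' => 2*y*Real.exp s'*Real.sin θ) (2*y*Real.exp s*Real.sin θ) s := by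
      have := ((Real.hasDerivAt_exp s).const_mul (2*y)).mul_const (Real.sin θ)
      convert this using 2 <;> ring
    have := ((h1.const_mul 2).sub h2).neg
    exact this.congr_deriv (by ring)
  have hden : HasDerivAt (fun s' => (aa y s' θ)^2)
      (2 * aa y s θ * (2*Real.exp s^2 - 2*y*Real.exp s*Real.sin θ)) s := by
    have := (hasDerivAt_aa_s y s θ).pow 2
    exact this.congr_deriv (by ring)
  have := hnum.div hden (pow_ne_zero 2 h)
  exact this.congr_deriv (by field_simp; ring)

lemma hasDerivAt_gt (y s θ : ℝ) (h : aa y s θ ≠ 0) :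
    HasDerivAt (fun θ' => gtf y s θ')
      (-(2*y*Real.exp s*Real.sin θ)/(aa y s θ)^2
        + 2*(2*y*Real.exp s*Real.cos θ)^2/(aa y s θ)^3) θ := by
  have hnum : HasDerivAt (fun θ' => 2*y*Real.exp s*Real.cos θ')
      (-(2*y*Real.exp s*Real.sin θ)) θ := by
    have := (Real.hasDerivAt_cos θ).const_mul (2*y*Real.exp s)
    exact this.congr_deriv (by ring)
  have hden : HasDerivAt (fun θ' => (aa y s θ')^2)
      (2 * aa y s θ * (-(2*y*Real.exp s*Real.cos θ))) θ := by
    have := (hasDerivAt_aa_th y s θ).pow 2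
    exact this.congr_deriv (by ring)
  have := hnum.div hden (pow_ne_zero 2 h)
  exact this.congr_deriv (by field_simp; ring)

lemma aa_contAt_s (y s θ : ℝ) : ContinuousAt (fun s' => aa y s' θ) s :=
  (hasDerivAt_aa_s y s θ).continuousAt

lemma aa_contAt_th (y s θ : ℝ) : ContinuousAt (fun θ' => aa y s θ') θ :=
  (hasDerivAt_aa_th y s θ).continuousAt

lemma deriv2_s (N : ℕ) (C₂ c : ℝ) (y : Fin N → ℝ) (s θ : ℝ)
    (hpos : ∀ j, 0 < aa (y j) s θ) :
    deriv (deriv (fun s' => C₂ * Real.exp (-2*s') + c * ∑ j, (aa (y j) s' θ)⁻¹)) s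
      = 4*C₂*Real.exp (-2*s) + c * ∑ j,
        (-(4*Real.exp s^2 - 2*(y j)*Real.exp s*Real.sin θ)/(aa (y j) s θ)^2
          + 2*(2*Real.exp s^2 - 2*(y j)*Real.exp s*Real.sin θ)^2/(aa (y j) s θ)^3) := by
  have hev : ∀ᶠ s' in nhds s, ∀ j, 0 < aa (y j) s' θ := by
    rw [Filter.eventually_all]
    intro j
    exact (aa_contAt_s (y j) s θ) (Ioi_mem_nhds (hpos j))
  have hexp : ∀ x : ℝ, HasDerivAt (fun s' => C₂ * Real.exp (-2*s')) (C₂ * (-2 * Real.exp (-2*x))) x := by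
    intro x
    have h0 : HasDerivAt (fun s' : ℝ => -2*s') (-2) x := by
      simpa using (hasDerivAt_id x).const_mul (-2)
    exact (h0.exp.const_mul C₂).congr_deriv (by ring)
  have hder1 : ∀ s', (∀ j, 0 < aa (y j) s' θ) →
      HasDerivAt (fun s'' => C₂ * Real.exp (-2*s'') + c * ∑ j, (aa (y j) s'' θ)⁻¹)
        (C₂ * (-2 * Real.exp (-2*s')) + c * ∑ j, gs (y j) s' θ) s' := by
    intro s' h
    exact (hexp s').add
      ((HasDerivAt.fun_sum (fun j _ => hasDerivAt_inv_aa_s (y j) s' θ (h j).ne')).const_mul c)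
  have hev2 : deriv (fun s'' => C₂ * Real.exp (-2*s'') + c * ∑ j, (aa (y j) s'' θ)⁻¹)
      =ᶠ[nhds s] fun s' => C₂ * (-2 * Real.exp (-2*s')) + c * ∑ j, gs (y j) s' θ :=
    hev.mono fun s' h => (hder1 s' h).deriv
  rw [hev2.deriv_eq]
  have h2 : HasDerivAt (fun s' => C₂ * (-2 * Real.exp (-2*s')) + c * ∑ j, gs (y j) s' θ)
      (4*C₂*Real.exp (-2*s) + c * ∑ j,
        (-(4*Real.exp s^2 - 2*(y j)*Real.exp s*Real.sin θ)/(aa (y j) s θ)^2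
          + 2*(2*Real.exp s^2 - 2*(y j)*Real.exp s*Real.sin θ)^2/(aa (y j) s θ)^3)) s := by
    have h0 : HasDerivAt (fun s' : ℝ => -2*s') (-2) s := by
      simpa using (hasDerivAt_id s).const_mul (-2)
    have he : HasDerivAt (fun s' => C₂ * (-2 * Real.exp (-2*s'))) (4*C₂*Real.exp (-2*s)) s :=
      ((h0.exp.const_mul (-2)).const_mul C₂).congr_deriv (by ring)
    exact he.add ((HasDerivAt.fun_sum (fun j _ => hasDerivAt_gs (y j) s θ (hpos j).ne')).const_mul c)
  exact h2.deriv

lemma deriv2_th (N : ℕ) (K : ℝ) (χ : ℝ → ℝ) (hχd : Differentiable ℝ χ)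
    (hχdd : Differentiable ℝ (deriv χ)) (y : Fin N → ℝ) (s θ : ℝ)
    (hpos : ∀ j, 0 < aa (y j) s θ) :
    deriv (deriv (fun θ' => K + χ θ' * ∑ j, (aa (y j) s θ')⁻¹)) θ
      = deriv (deriv χ) θ * (∑ j, (aa (y j) s θ)⁻¹)
        + 2 * deriv χ θ * (∑ j, gtf (y j) s θ)
        + χ θ * ∑ j, (-(2*(y j)*Real.exp s*Real.sin θ)/(aa (y j) s θ)^2
            + 2*(2*(y j)*Real.exp s*Real.cos θ)^2/(aa (y j) s θ)^3) := by
  have hev : ∀ᶠ θ' in nhds θ, ∀ j, 0 < aa (y j) s θ' := by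
    rw [Filter.eventually_all]
    intro j
    exact (aa_contAt_th (y j) s θ) (Ioi_mem_nhds (hpos j))
  have hder1 : ∀ θ', (∀ j, 0 < aa (y j) s θ') →
      HasDerivAt (fun t => K + χ t * ∑ j, (aa (y j) s t)⁻¹)
        (deriv χ θ' * (∑ j, (aa (y j) s θ')⁻¹) + χ θ' * ∑ j, gtf (y j) s θ') θ' := by
    intro θ' h
    have hs : HasDerivAt (fun t => ∑ j, (aa (y j) s t)⁻¹) (∑ j, gtf (y j) s θ') θ' :=
      HasDerivAt.fun_sum (fun j _ => hasDerivAt_inv_aa_th (y j) s θ' (h j).ne')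
    exact ((hasDerivAt_const θ' K).add (((hχd θ').hasDerivAt).mul hs)).congr_deriv (by ring)
  have hev2 : deriv (fun t => K + χ t * ∑ j, (aa (y j) s t)⁻¹)
      =ᶠ[nhds θ] fun θ' => deriv χ θ' * (∑ j, (aa (y j) s θ')⁻¹) + χ θ' * ∑ j, gtf (y j) s θ' :=
    hev.mono fun θ' h => (hder1 θ' h).deriv
  rw [hev2.deriv_eq]
  have h2 : HasDerivAt (fun θ' => deriv χ θ' * (∑ j, (aa (y j) s θ')⁻¹) + χ θ' * ∑ j, gtf (y j) s θ')
      (deriv (deriv χ) θ * (∑ j, (aa (y j) s θ)⁻¹)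
        + 2 * deriv χ θ * (∑ j, gtf (y j) s θ)
        + χ θ * ∑ j, (-(2*(y j)*Real.exp s*Real.sin θ)/(aa (y j) s θ)^2
            + 2*(2*(y j)*Real.exp s*Real.cos θ)^2/(aa (y j) s θ)^3)) θ := by
    have hs0 : HasDerivAt (fun t => ∑ j, (aa (y j) s t)⁻¹) (∑ j, gtf (y j) s θ) θ :=
      HasDerivAt.fun_sum (fun j _ => hasDerivAt_inv_aa_th (y j) s θ (hpos j).ne')
    have hs1 : HasDerivAt (fun t => ∑ j, gtf (y j) s t)
        (∑ j, (-(2*(y j)*Real.exp s*Real.sin θ)/(aa (y j) s θ)^2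
            + 2*(2*(y j)*Real.exp s*Real.cos θ)^2/(aa (y j) s θ)^3)) θ :=
      HasDerivAt.fun_sum (fun j _ => hasDerivAt_gt (y j) s θ (hpos j).ne')
    have ha : HasDerivAt (fun θ' => deriv χ θ' * (∑ j, (aa (y j) s θ')⁻¹))
        (deriv (deriv χ) θ * (∑ j, (aa (y j) s θ)⁻¹) + deriv χ θ * (∑ j, gtf (y j) s θ)) θ :=
      ((hχdd θ).hasDerivAt).mul hs0
    have hb : HasDerivAt (fun θ' => χ θ' * ∑ j, gtf (y j) s θ')
        (deriv χ θ * (∑ j, gtf (y j) s θ) + χ θ * ∑ j, (-(2*(y j)*Real.exp s*Real.sin θ)/(aa (y j) s θ)^2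
            + 2*(2*(y j)*Real.exp s*Real.cos θ)^2/(aa (y j) s θ)^3)) θ :=
      ((hχd θ).hasDerivAt).mul hs1
    exact (ha.add hb).congr_deriv (by ring)
  exact h2.deriv

lemma lap_term (y s θ : ℝ) (h : aa y s θ ≠ 0) :
    (-(4*Real.exp s^2 - 2*y*Real.exp s*Real.sin θ)/(aa y s θ)^2
      + 2*(2*Real.exp s^2 - 2*y*Real.exp s*Real.sin θ)^2/(aa y s θ)^3)
    + (-(2*y*Real.exp s*Real.sin θ)/(aa y s θ)^2
      + 2*(2*y*Real.exp s*Real.cos θ)^2/(aa y s θ)^3)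
    = 4*Real.exp s^2/(aa y s θ)^2 := by
  have hsc : Real.sin θ^2 + Real.cos θ^2 = 1 := Real.sin_sq_add_cos_sq θ
  have haa : aa y s θ = Real.exp s ^ 2 - 2*y*Real.exp s*Real.sin θ + y^2 := rfl
  have key : 2*(2*Real.exp s^2 - 2*y*Real.exp s*Real.sin θ)^2
      + 2*(2*y*Real.exp s*Real.cos θ)^2 = 8*Real.exp s^2 * aa y s θ := by
    rw [haa]; linear_combination (8*y^2*Real.exp s^2) * hsc
  field_simp
  rw [haa]; linear_combination (8*y^2*Real.exp s) * hsc

lemma deriv2_exp (C₂ s : ℝ) :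
    deriv (deriv (fun s' => C₂ * Real.exp (-2*s'))) s = 4*C₂*Real.exp (-2*s) := by
  have hexp : ∀ x : ℝ, HasDerivAt (fun s' => C₂ * Real.exp (-2*s')) (C₂ * (-2 * Real.exp (-2*x))) x := by
    intro x
    have h0 : HasDerivAt (fun s' : ℝ => -2*s') (-2) x := by
      simpa using (hasDerivAt_id x).const_mul (-2)
    exact (h0.exp.const_mul C₂).congr_deriv (by ring)
  have h1 : deriv (fun s' => C₂ * Real.exp (-2*s')) = fun x => C₂ * (-2 * Real.exp (-2*x)) :=
    funext fun x => (hexp x).deriv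
  rw [h1]
  have h0 : HasDerivAt (fun s' : ℝ => -2*s') (-2) s := by
    simpa using (hasDerivAt_id s).const_mul (-2)
  exact (((h0.exp.const_mul (-2)).const_mul C₂).congr_deriv (by ring)).deriv

end

noncomputable section

open Complex

set_option maxHeartbeats 2000000 in
/-- There is a constant `C₂ ≥ 1`, depending only on `N` and the cutoff `χ`, such that
the barrier `G` satisfies `∂²G/∂s² + ∂²G/∂θ² ≥ 4e^{2s}/δ⁴` on its domain. -/
theorem barrier_superharmonic (χ : ℝ → ℝ) (hχ : ContDiff ℝ 2 χ)
    (hχ01 : ∀ θ, χ θ ∈ Set.Icc (0 : ℝ) 1)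
    (hχ1 : ∀ θ, θ ≤ Real.pi → χ θ = 1)
    (hχ0 : ∀ θ, 2 * Real.pi ≤ θ → χ θ = 0)
    (N : ℕ) (hN : 1 ≤ N) :
    ∃ C₂ : ℝ, 1 ≤ C₂ ∧ ∀ y : Fin N → ℝ, (∀ j, 0 < y j) →
      ∀ s θ : ℝ, 0 < θ →
        (∀ j, θ < Real.pi →
          Complex.exp ((s : ℂ) + Complex.I * (θ : ℂ)) ≠ Complex.I * (y j : ℂ)) →
        4 * Real.exp (2 * s) / (deltaFn N y s θ) ^ 4 ≤
          deriv (deriv (fun s' => barrierG N C₂ χ y s' θ)) s +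
            deriv (deriv (fun θ' => barrierG N C₂ χ y s θ')) θ := by
  -- smoothness of χ
  have hχ11 : ContDiff ℝ ((1:WithTop ℕ∞)+1) χ := by rw [one_add_one_eq_two]; exact hχ
  rw [contDiff_succ_iff_deriv] at hχ11
  have hχd : Differentiable ℝ χ := hχ11.1
  have hχ' : ContDiff ℝ ((0:WithTop ℕ∞)+1) (deriv χ) := by rw [zero_add]; exact hχ11.2.2
  rw [contDiff_succ_iff_deriv] at hχ'
  have hχdd : Differentiable ℝ (deriv χ) := hχ'.1
  -- bounds for deriv χ and deriv (deriv χ) on [π, 2π]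
  obtain ⟨M₁, hM₁⟩ := (isCompact_Icc (a := Real.pi) (b := 2*Real.pi)).exists_bound_of_continuousOn
    (hχdd.continuous.continuousOn)
  obtain ⟨M₂, hM₂⟩ := (isCompact_Icc (a := Real.pi) (b := 2*Real.pi)).exists_bound_of_continuousOn
    ((hχ'.2.2.continuous).continuousOn)
  have hπΙ : Real.pi ∈ Set.Icc Real.pi (2*Real.pi) := ⟨le_refl _, by linarith [Real.pi_pos]⟩
  have hM₁0 : 0 ≤ M₁ := le_trans (norm_nonneg _) (hM₁ Real.pi hπΙ)
  have hM₂0 : 0 ≤ M₂ := le_trans (norm_nonneg _) (hM₂ Real.pi hπΙ)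
  set C₂ : ℝ := 1 + (2*M₁ + M₂) * N with hC₂def
  have hMN : 0 ≤ (2*M₁ + M₂) * N := by positivity
  have hC₂1 : 1 ≤ C₂ := by rw [hC₂def]; linarith
  refine ⟨C₂, hC₂1, ?_⟩
  intro y hy s θ hθ hz
  have hE : (0:ℝ) < Real.exp s := Real.exp_pos s
  have hE2 : (0:ℝ) < Real.exp s ^ 2 := by positivity
  have hexp2 : Real.exp (2*s) = Real.exp s ^ 2 := by rw [two_mul, Real.exp_add, sq]
  have hexpn : Real.exp (-2*s) = (Real.exp s ^ 2)⁻¹ := by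
    rw [show (-2*s : ℝ) = -(2*s) by ring, Real.exp_neg, hexp2]
  have hLHS : 4*Real.exp (2*s)/Real.exp s^4 = 4*(Real.exp s ^2)⁻¹ := by
    rw [hexp2]; field_simp
  -- vanishing of χ derivatives below π
  have hderiv1_lt : ∀ t, t < Real.pi → deriv χ t = 0 := by
    intro t ht
    have hev : χ =ᶠ[nhds t] fun _ => 1 :=
      Filter.eventually_of_mem (Iio_mem_nhds ht) fun u hu => hχ1 u (le_of_lt hu)
    rw [hev.deriv_eq]; simp
  have hderiv2_lt : ∀ t, t < Real.pi → deriv (deriv χ) t = 0 := by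
    intro t ht
    have hev : deriv χ =ᶠ[nhds t] fun _ => 0 :=
      Filter.eventually_of_mem (Iio_mem_nhds ht) fun u hu => hderiv1_lt u hu
    rw [hev.deriv_eq]; simp
  by_cases hθ2 : 2*Real.pi < θ
  · -- easy region: χ vanishes near θ
    have hχθ : χ θ = 0 := hχ0 θ hθ2.le
    have hδ : deltaFn N y s θ = Real.exp s := by
      rw [deltaFn, if_neg]; push_neg; linarith [Real.pi_pos]
    have hfs : (fun s' => barrierG N C₂ χ y s' θ) = fun s' => C₂ * Real.exp (-2*s') := by
      funext s'; simp [barrierG, hχθ]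
    have hft : (fun θ' => barrierG N C₂ χ y s θ') =ᶠ[nhds θ]
        fun _ => C₂ * Real.exp (-2*s) := by
      refine Filter.eventually_of_mem (Ioi_mem_nhds hθ2) fun u hu => ?_
      simp [barrierG, hχ0 u (le_of_lt hu)]
    have hd2t : deriv (deriv (fun θ' => barrierG N C₂ χ y s θ')) θ = 0 := by
      rw [hft.deriv.deriv_eq]; simp
    rw [hδ, hfs, deriv2_exp, hd2t, hLHS, hexpn, add_zero]
    have hinv : (0:ℝ) < (Real.exp s ^ 2)⁻¹ := by positivity
    nlinarith
  · -- main region: θ ≤ 2π, all aa positive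
    push_neg at hθ2
    have hpos : ∀ j, 0 < aa (y j) s θ := by
      intro j
      by_cases hθπ : θ < Real.pi
      · have hne : Complex.exp ((s : ℂ) + Complex.I * (θ : ℂ)) - Complex.I * (y j : ℂ) ≠ 0 :=
          sub_ne_zero.mpr (hz j hθπ)
        have := pow_pos (norm_pos_iff.mpr hne) 2
        rwa [abs_sq_eq] at this
      · push_neg at hθπ
        have hsin : Real.sin θ ≤ 0 := by
          have h1 : 0 ≤ Real.sin (θ - Real.pi) :=
            Real.sin_nonneg_of_nonneg_of_le_pi (by linarith) (by linarith)
          rw [Real.sin_sub_pi] at h1; linarith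
        have hterm : 0 ≤ 2*(y j)*Real.exp s*(-Real.sin θ) :=
          mul_nonneg (mul_nonneg (mul_nonneg (by norm_num) (hy j).le) hE.le)
            (neg_nonneg.mpr hsin)
        unfold aa; nlinarith [sq_nonneg (y j), hE2]
    have hfs : (fun s' => barrierG N C₂ χ y s' θ)
        = fun s' => C₂ * Real.exp (-2*s') + χ θ * ∑ j, (aa (y j) s' θ)⁻¹ := by
      funext s'; simp only [barrierG, abs_sq_eq]
    have hft : (fun θ' => barrierG N C₂ χ y s θ')
        = fun θ' => C₂ * Real.exp (-2*s) + χ θ' * ∑ j, (aa (y j) s θ')⁻¹ := by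
      funext θ'; simp only [barrierG, abs_sq_eq]
    rw [hfs, hft, deriv2_s N C₂ (χ θ) y s θ hpos,
      deriv2_th N (C₂ * Real.exp (-2*s)) χ hχd hχdd y s θ hpos]
    have hlap : χ θ * (∑ j,
        (-(4*Real.exp s^2 - 2*(y j)*Real.exp s*Real.sin θ)/(aa (y j) s θ)^2
          + 2*(2*Real.exp s^2 - 2*(y j)*Real.exp s*Real.sin θ)^2/(aa (y j) s θ)^3))
        + χ θ * (∑ j, (-(2*(y j)*Real.exp s*Real.sin θ)/(aa (y j) s θ)^2
            + 2*(2*(y j)*Real.exp s*Real.cos θ)^2/(aa (y j) s θ)^3))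
        = χ θ * ∑ j, 4*Real.exp s^2/(aa (y j) s θ)^2 := by
      rw [← mul_add, ← Finset.sum_add_distrib]
      congr 1
      exact Finset.sum_congr rfl fun j _ => lap_term (y j) s θ (hpos j).ne'
    have hsumnn : 0 ≤ ∑ j, 4*Real.exp s^2/(aa (y j) s θ)^2 :=
      Finset.sum_nonneg fun j _ => by positivity
    by_cases hθπ : θ < Real.pi
    · -- here χ = 1 and its derivatives vanish
      have hχθ : χ θ = 1 := hχ1 θ hθπ.le
      have hδ : deltaFn N y s θ = min (Real.exp s)
          (⨅ j, ‖Complex.exp ((s : ℂ) + Complex.I * (θ : ℂ)) -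
            Complex.I * (y j : ℂ)‖) := by rw [deltaFn, if_pos hθπ]
      rw [hδ, hderiv1_lt θ hθπ, hderiv2_lt θ hθπ]
      have hkey : 4 * Real.exp (2*s) / (min (Real.exp s)
          (⨅ j, ‖Complex.exp ((s : ℂ) + Complex.I * (θ : ℂ)) -
            Complex.I * (y j : ℂ)‖))^4
          ≤ 4*C₂*Real.exp (-2*s) + χ θ * ∑ j, 4*Real.exp s^2/(aa (y j) s θ)^2 := by
        rw [hχθ, one_mul]
        rcases le_total (Real.exp s)
            (⨅ j, ‖Complex.exp ((s : ℂ) + Complex.I * (θ : ℂ)) -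
              Complex.I * (y j : ℂ)‖) with hm|hm
        · rw [min_eq_left hm, hLHS, hexpn]
          have hinv : (0:ℝ) < (Real.exp s ^ 2)⁻¹ := by positivity
          nlinarith
        · rw [min_eq_right hm]
          haveI : Nonempty (Fin N) := ⟨⟨0, Nat.lt_of_lt_of_le Nat.zero_lt_one hN⟩⟩
          obtain ⟨j0, hj0⟩ := exists_eq_ciInf_of_finite
            (f := fun j => ‖Complex.exp ((s : ℂ) + Complex.I * (θ : ℂ)) -
              Complex.I * (y j : ℂ)‖)
          rw [← hj0]
          have habs4 : (‖Complex.exp ((s : ℂ) + Complex.I * (θ : ℂ)) -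
              Complex.I * (y j0 : ℂ)‖)^4 = (aa (y j0) s θ)^2 := by
            rw [show (‖Complex.exp ((s : ℂ) + Complex.I * (θ : ℂ)) -
              Complex.I * (y j0 : ℂ)‖)^4 = ((‖Complex.exp ((s : ℂ) + Complex.I * (θ : ℂ)) -
              Complex.I * (y j0 : ℂ)‖)^2)^2 by ring, abs_sq_eq]
          rw [habs4, hexp2]
          have hsingle : 4*Real.exp s^2/(aa (y j0) s θ)^2
              ≤ ∑ j, 4*Real.exp s^2/(aa (y j) s θ)^2 :=
            Finset.single_le_sum (f := fun j => 4*Real.exp s^2/(aa (y j) s θ)^2)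
              (fun j _ => by positivity) (Finset.mem_univ j0)
          have hC₂nn : 0 ≤ 4*C₂*Real.exp (-2*s) := by positivity
          calc 4*Real.exp s^2/(aa (y j0) s θ)^2
              ≤ ∑ j, 4*Real.exp s^2/(aa (y j) s θ)^2 := hsingle
            _ ≤ 4*C₂*Real.exp (-2*s) + ∑ j, 4*Real.exp s^2/(aa (y j) s θ)^2 :=
                le_add_of_nonneg_left hC₂nn
      simp only [zero_mul, mul_zero, add_zero, zero_add]
      linarith [hlap, hkey]
    · -- transition region π ≤ θ ≤ 2π
      push_neg at hθπ
      have hδ : deltaFn N y s θ = Real.exp s := by rw [deltaFn, if_neg (not_lt.mpr hθπ)]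
      rw [hδ, hLHS]
      have hsin : Real.sin θ ≤ 0 := by
        have h1 : 0 ≤ Real.sin (θ - Real.pi) :=
          Real.sin_nonneg_of_nonneg_of_le_pi (by linarith) (by linarith)
        rw [Real.sin_sub_pi] at h1; linarith
      have hterm : ∀ j, 0 ≤ 2*(y j)*Real.exp s*(-Real.sin θ) := fun j =>
        mul_nonneg (mul_nonneg (mul_nonneg (by norm_num) (hy j).le) hE.le)
          (neg_nonneg.mpr hsin)
      have haaE : ∀ j, Real.exp s^2 ≤ aa (y j) s θ := by
        intro j; unfold aa; nlinarith [sq_nonneg (y j), hterm j]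
      have hinvle : ∀ j, (aa (y j) s θ)⁻¹ ≤ (Real.exp s^2)⁻¹ := fun j =>
        inv_anti₀ hE2 (haaE j)
      have hS0nn : 0 ≤ ∑ j, (aa (y j) s θ)⁻¹ :=
        Finset.sum_nonneg fun j _ => inv_nonneg.mpr (hpos j).le
      have hS0 : (∑ j, (aa (y j) s θ)⁻¹) ≤ N * (Real.exp s^2)⁻¹ := by
        calc (∑ j, (aa (y j) s θ)⁻¹) ≤ ∑ _j : Fin N, (Real.exp s^2)⁻¹ :=
              Finset.sum_le_sum fun j _ => hinvle j
          _ = N * (Real.exp s^2)⁻¹ := by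
              rw [Finset.sum_const, Finset.card_univ, Fintype.card_fin, nsmul_eq_mul]
      have hgt : ∀ j, |gtf (y j) s θ| ≤ (Real.exp s^2)⁻¹ := by
        intro j
        have h2y : 2*(y j)*Real.exp s ≤ aa (y j) s θ := by
          unfold aa; nlinarith [sq_nonneg (Real.exp s - y j), hterm j]
        have h2ynn : 0 ≤ 2*(y j)*Real.exp s :=
          mul_nonneg (mul_nonneg (by norm_num) (hy j).le) hE.le
        have hnum : |2*(y j)*Real.exp s*Real.cos θ| ≤ 2*(y j)*Real.exp s := by
          rw [abs_mul]
          calc |2*(y j)*Real.exp s| * |Real.cos θ| ≤ |2*(y j)*Real.exp s| * 1 :=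
                mul_le_mul_of_nonneg_left (Real.abs_cos_le_one θ) (abs_nonneg _)
            _ = 2*(y j)*Real.exp s := by rw [mul_one, _root_.abs_of_nonneg h2ynn]
        have hden : (0:ℝ) < (aa (y j) s θ)^2 := pow_pos (hpos j) 2
        calc |gtf (y j) s θ|
            = |2*(y j)*Real.exp s*Real.cos θ| / (aa (y j) s θ)^2 := by
              simp only [gtf, abs_div, _root_.abs_of_pos hden]
          _ ≤ (2*(y j)*Real.exp s)/(aa (y j) s θ)^2 := (div_le_div_iff_of_pos_right hden).mpr hnum
          _ ≤ (aa (y j) s θ)/(aa (y j) s θ)^2 := (div_le_div_iff_of_pos_right hden).mpr h2y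
          _ = (aa (y j) s θ)⁻¹ := by
              rw [pow_two, ← div_div, div_self (hpos j).ne', one_div]
          _ ≤ (Real.exp s^2)⁻¹ := hinvle j
      have hSgt : |∑ j, gtf (y j) s θ| ≤ N * (Real.exp s^2)⁻¹ := by
        calc |∑ j, gtf (y j) s θ| ≤ ∑ j, |gtf (y j) s θ| :=
              Finset.abs_sum_le_sum_abs _ _
          _ ≤ ∑ _j : Fin N, (Real.exp s^2)⁻¹ := Finset.sum_le_sum fun j _ => hgt j
          _ = N * (Real.exp s^2)⁻¹ := by
              rw [Finset.sum_const, Finset.card_univ, Fintype.card_fin, nsmul_eq_mul]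
      have hχ'b : |deriv χ θ| ≤ M₁ := by
        have := hM₁ θ ⟨hθπ, hθ2⟩; rwa [Real.norm_eq_abs] at this
      have hχ''b : |deriv (deriv χ) θ| ≤ M₂ := by
        have := hM₂ θ ⟨hθπ, hθ2⟩; rwa [Real.norm_eq_abs] at this
      have hb1 : -(M₂ * (N * (Real.exp s^2)⁻¹)) ≤
          deriv (deriv χ) θ * (∑ j, (aa (y j) s θ)⁻¹) := by
        have h1 : -M₂ ≤ deriv (deriv χ) θ := (abs_le.mp hχ''b).1
        have h2 : -M₂ * (∑ j, (aa (y j) s θ)⁻¹) ≤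
            deriv (deriv χ) θ * (∑ j, (aa (y j) s θ)⁻¹) :=
          mul_le_mul_of_nonneg_right h1 hS0nn
        have h3 : -M₂ * (N * (Real.exp s^2)⁻¹) ≤ -M₂ * (∑ j, (aa (y j) s θ)⁻¹) := by
          nlinarith [mul_nonneg hM₂0 (sub_nonneg.mpr hS0)]
        linarith
      have hb2 : -(2*M₁*(N*(Real.exp s^2)⁻¹)) ≤
          2 * deriv χ θ * (∑ j, gtf (y j) s θ) := by
        have habs : |2 * deriv χ θ * (∑ j, gtf (y j) s θ)|
            = 2 * (|deriv χ θ| * |∑ j, gtf (y j) s θ|) := by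
          rw [abs_mul, abs_mul]; norm_num; ring
        have hle : |deriv χ θ| * |∑ j, gtf (y j) s θ| ≤ M₁ * (N*(Real.exp s^2)⁻¹) :=
          mul_le_mul hχ'b hSgt (abs_nonneg _) hM₁0
        have := neg_abs_le (2 * deriv χ θ * (∑ j, gtf (y j) s θ))
        rw [habs] at this
        linarith
      have hχnn : 0 ≤ χ θ := (hχ01 θ).1
      have hprodnn : 0 ≤ χ θ * ∑ j, 4*Real.exp s^2/(aa (y j) s θ)^2 :=
        mul_nonneg hχnn hsumnn
      have hc2 : 4*C₂*Real.exp (-2*s)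
          = 4*(Real.exp s^2)⁻¹ + 4*((2*M₁+M₂)*N)*(Real.exp s^2)⁻¹ := by
        rw [hC₂def, hexpn]; ring
      have hprod2 : 0 ≤ ((2*M₁+M₂)*N)*(Real.exp s^2)⁻¹ := by positivity
      linarith [hlap, hb1, hb2, hprodnn, hc2, hprod2]
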